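/- Let A = {p₁,…,pₙ} and B = {q₁,…,qₙ} be two d-dimensional finite subsets of ℤ^d (n ≥ d+1) having the same volume vector, i.e., for every (d+1)-subset of indices the determinants det(1; p_{i₁},…,p_{i_{d+1}}) and det(1; q_{i₁},…,q_{i_{d+1}}) coincide. Then there is a unique affine map t: ℝ^d → ℝ^d with determinant of its linear part equal to 1 such that t(p_i) = q_i for all i. -/

import Mathlib

open Matrix

/-- The signed normalized volume of the (d+1) points `p ∘ σ` of `ℤ^d`:
the determinant of the (d+1)×(d+1) matrix whose columns are (1, p (σ j)). -/
def volDet {d n : ℕ} (p : Fin n → Fin d → ℤ) (σ : Fin (d + 1) → Fin n) : ℤ :=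
  Matrix.det (Matrix.of fun i j => (Fin.cons 1 (fun i' => p (σ j) i') : Fin (d + 1) → ℤ) i)

private lemma volDet_cast {d n : ℕ} (p : Fin n → Fin d → ℤ) (σ : Fin (d + 1) → Fin n) :
    ((volDet p σ : ℤ) : ℝ) =
      (Matrix.of fun i j =>
        (Fin.cons 1 (fun i' => ((p (σ j) i' : ℤ) : ℝ)) : Fin (d + 1) → ℝ) i).det := by
  rw [volDet, show ((Matrix.det _ : ℤ) : ℝ) = (Int.castRingHom ℝ) (Matrix.det _) from rfl,
    RingHom.map_det]
  congr 1
  ext i j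
  refine Fin.cases ?_ ?_ i <;> simp

private lemma volDet_all {d n : ℕ} {p q : Fin n → Fin d → ℤ}
    (hw : ∀ σ : Fin (d + 1) → Fin n, StrictMono σ → volDet p σ = volDet q σ)
    (σ : Fin (d + 1) → Fin n) : volDet p σ = volDet q σ := by
  by_cases hinj : Function.Injective σ
  · set π := Tuple.sort σ with hπ
    have hmono : StrictMono (σ ∘ π) :=
      (Tuple.monotone_sort σ).strictMono_of_injective (hinj.comp π.injective)
    have h := hw _ hmono
    have key : ∀ r : Fin n → Fin d → ℤ,
        volDet r (σ ∘ π) = ((Equiv.Perm.sign π : ℤˣ) : ℤ) * volDet r σ := by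
      intro r
      rw [volDet, volDet]
      have : (Matrix.of fun i j => (Fin.cons 1 (fun i' => r ((σ ∘ π) j) i') : Fin (d + 1) → ℤ) i)
          = (Matrix.of fun i j =>
              (Fin.cons 1 (fun i' => r (σ j) i') : Fin (d + 1) → ℤ) i).submatrix id π := rfl
      rw [this, Matrix.det_permute']
      norm_cast
    rw [key p, key q] at h
    exact mul_left_cancel₀ (by simp) h
  · simp only [Function.Injective, not_forall] at hinj
    obtain ⟨i, j, hij, hne⟩ := hinj
    rw [volDet, volDet, Matrix.det_zero_of_column_eq hne, Matrix.det_zero_of_column_eq hne] <;>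
      intro k <;> simp [hij]


private lemma span_lift_top {d n : ℕ} (hn : 0 < n) (r : Fin n → Fin d → ℝ)
    (hr : affineSpan ℝ (Set.range r) = ⊤) :
    Submodule.span ℝ (Set.range fun k => (Fin.cons 1 (r k) : Fin (d + 1) → ℝ)) = ⊤ := by
  set P : Fin n → Fin (d + 1) → ℝ := fun k => Fin.cons 1 (r k) with hPdef
  have hvs : vectorSpan ℝ (Set.range r) = ⊤ := by
    rw [← direction_affineSpan, hr, AffineSubspace.direction_top]
  let C : (Fin d → ℝ) →ₗ[ℝ] (Fin (d + 1) → ℝ) :=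
    { toFun := fun v => Fin.cons 0 v
      map_add' := by intro v w; ext i; refine Fin.cases ?_ ?_ i <;> simp
      map_smul' := by intro c v; ext i; refine Fin.cases ?_ ?_ i <;> simp }
  have hC : ∀ v : Fin d → ℝ, Fin.cons 0 v ∈ Submodule.span ℝ (Set.range P) := by
    have hle : vectorSpan ℝ (Set.range r) ≤ (Submodule.span ℝ (Set.range P)).comap C := by
      rw [vectorSpan_def]
      refine Submodule.span_le.2 ?_
      rintro x ⟨a, ⟨k, rfl⟩, b, ⟨l, rfl⟩, rfl⟩
      refine Submodule.mem_comap.2 ?_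
      have hx : C (r k -ᵥ r l) = P k - P l := by
        ext i; refine Fin.cases ?_ ?_ i <;> simp [C, P]
      rw [hx]
      exact sub_mem (Submodule.subset_span ⟨k, rfl⟩) (Submodule.subset_span ⟨l, rfl⟩)
    intro v
    exact hle (hvs ▸ Submodule.mem_top) 
  rw [eq_top_iff]
  rintro x -
  set k0 : Fin n := ⟨0, hn⟩ with hk0
  have h1 : P k0 ∈ Submodule.span ℝ (Set.range P) := Submodule.subset_span ⟨k0, rfl⟩
  have hx : x = x 0 • P k0 + Fin.cons 0 (fun i => x i.succ - x 0 * r k0 i) := by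
    ext i; refine Fin.cases ?_ ?_ i <;> simp [P] <;> ring
  rw [hx]
  exact add_mem (Submodule.smul_mem _ _ h1) (hC _)

private lemma exists_unit_mat {d n : ℕ} (P : Fin n → Fin (d + 1) → ℝ)
    (hspan : Submodule.span ℝ (Set.range P) = ⊤) :
    ∃ σ₀ : Fin (d + 1) → Fin n, IsUnit (Matrix.of fun i j => P (σ₀ j) i) := by
  classical
  obtain ⟨b, hb_sub, hb_span, hb_li⟩ := exists_linearIndependent ℝ (Set.range P)
  rw [hspan] at hb_span
  have hbfin : b.Finite := (Set.finite_range P).subset hb_sub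
  have : Fintype b := hbfin.fintype
  let B : Module.Basis b ℝ (Fin (d + 1) → ℝ) := Module.Basis.mk hb_li (by rw [Subtype.range_coe, hb_span])
  have hcard : Fintype.card b = d + 1 := by
    have := Module.finrank_eq_card_basis B
    simpa using this.symm
  let e : Fin (d + 1) ≃ b := (Fintype.equivFinOfCardEq hcard).symm
  have hchoice : ∀ j : Fin (d + 1), ∃ k, P k = (e j : Fin (d + 1) → ℝ) := by
    intro j
    obtain ⟨k, hk⟩ := hb_sub (e j).2
    exact ⟨k, hk⟩
  choose σ₀ hσ₀ using hchoice
  refine ⟨σ₀, ?_⟩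
  rw [← Matrix.linearIndependent_cols_iff_isUnit]
  have : (fun j => Matrix.transpose (Matrix.of fun i j' => P (σ₀ j') i) j)
      = fun j => ((e j : Fin (d + 1) → ℝ)) := by
    funext j; ext i
    simp only [Matrix.transpose_apply, Matrix.of_apply]
    rw [hσ₀ j]
  show LinearIndependent ℝ (fun j => Matrix.transpose (Matrix.of fun i j' => P (σ₀ j') i) j)
  rw [this]
  exact hb_li.comp e e.injective

/-- If two d-dimensional configurations of n points in ℤ^d have the same volume
vector, there is a unique affine map with linear part of determinant 1 sending
one to the other (respecting the order of points). -/
theorem unique_affine_map_of_volume_vector {d n : ℕ} (hn : d + 1 ≤ n)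
    (p q : Fin n → Fin d → ℤ)
    (hp : affineSpan ℝ (Set.range fun k => fun i => ((p k i : ℝ))) = ⊤)
    (hq : affineSpan ℝ (Set.range fun k => fun i => ((q k i : ℝ))) = ⊤)
    (hw : ∀ σ : Fin (d + 1) → Fin n, StrictMono σ → volDet p σ = volDet q σ) :
    ∃! t : (Fin d → ℝ) →ᵃ[ℝ] (Fin d → ℝ),
      LinearMap.det t.linear = 1 ∧
      ∀ k, t (fun i => (p k i : ℝ)) = fun i => (q k i : ℝ) := by
  classical
  have hwall : ∀ σ : Fin (d + 1) → Fin n,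
      (Matrix.of fun i j =>
        (Fin.cons 1 (fun i' => ((p (σ j) i' : ℤ) : ℝ)) : Fin (d + 1) → ℝ) i).det
      = (Matrix.of fun i j =>
        (Fin.cons 1 (fun i' => ((q (σ j) i' : ℤ) : ℝ)) : Fin (d + 1) → ℝ) i).det := by
    intro σ
    rw [← volDet_cast, ← volDet_cast]
    exact_mod_cast volDet_all hw σ
  have hPspan : Submodule.span ℝ
      (Set.range fun k => (Fin.cons 1 (fun i => ((p k i : ℝ))) : Fin (d + 1) → ℝ)) = ⊤ :=
    span_lift_top (by omega) _ hp
  set pr : Fin n → Fin d → ℝ := fun k i => (p k i : ℝ) with hprdef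
  set qr : Fin n → Fin d → ℝ := fun k i => (q k i : ℝ) with hqrdef
  set P : Fin n → Fin (d + 1) → ℝ := fun k => Fin.cons 1 (pr k) with hPdef
  set Q : Fin n → Fin (d + 1) → ℝ := fun k => Fin.cons 1 (qr k) with hQdef
  obtain ⟨σ₀, hM⟩ : ∃ σ₀ : Fin (d + 1) → Fin n,
      IsUnit (Matrix.of fun i j => P (σ₀ j) i) := exists_unit_mat P hPspan
  set M : Matrix (Fin (d+1)) (Fin (d+1)) ℝ := Matrix.of fun i j => P (σ₀ j) i with hMdef
  set N : Matrix (Fin (d+1)) (Fin (d+1)) ℝ := Matrix.of fun i j => Q (σ₀ j) i with hNdef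
  have hdet : M.det = N.det := hwall σ₀
  have hMdu : IsUnit M.det := (Matrix.isUnit_iff_isUnit_det M).1 hM
  have hMd0 : M.det ≠ 0 := hMdu.ne_zero
  set A : Matrix (Fin (d+1)) (Fin (d+1)) ℝ := N * M⁻¹ with hAdef
  -- M⁻¹ *ᵥ b via Cramer
  have hMinv : ∀ b : Fin (d+1) → ℝ, M⁻¹ *ᵥ b = (M.det)⁻¹ • Matrix.cramer M b := by
    intro b
    apply Matrix.mulVec_injective_iff_isUnit.2 hM
    rw [Matrix.mulVec_mulVec, Matrix.mul_nonsing_inv M hMdu, Matrix.one_mulVec,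
      Matrix.mulVec_smul, Matrix.mulVec_cramer, smul_smul, inv_mul_cancel₀ hMd0, one_smul]
  have hA : ∀ k, A *ᵥ P k = Q k := by
    intro k
    have hcr : Matrix.cramer M (P k) = Matrix.cramer N (Q k) := by
      ext j
      rw [Matrix.cramer_apply, Matrix.cramer_apply]
      have h1 : M.updateCol j (P k)
          = Matrix.of fun i j' => P ((Function.update σ₀ j k) j') i := by
        ext i j'
        by_cases h : j' = j
        · subst h; simp [Matrix.updateCol_self]
        · rw [Matrix.updateCol_ne h]
          show P (σ₀ j') i = P (Function.update σ₀ j k j') i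
          rw [Function.update_of_ne h]
      have h2 : N.updateCol j (Q k)
          = Matrix.of fun i j' => Q ((Function.update σ₀ j k) j') i := by
        ext i j'
        by_cases h : j' = j
        · subst h; simp [Matrix.updateCol_self]
        · rw [Matrix.updateCol_ne h]
          show Q (σ₀ j') i = Q (Function.update σ₀ j k j') i
          rw [Function.update_of_ne h]
      rw [h1, h2]
      exact hwall _
    calc A *ᵥ P k = N *ᵥ (M⁻¹ *ᵥ P k) := by rw [← Matrix.mulVec_mulVec]
      _ = N *ᵥ ((M.det)⁻¹ • Matrix.cramer N (Q k)) := by rw [hMinv, hcr]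
      _ = (M.det)⁻¹ • (N.det • Q k) := by rw [Matrix.mulVec_smul, Matrix.mulVec_cramer]
      _ = Q k := by rw [← hdet, smul_smul, inv_mul_cancel₀ hMd0, one_smul]
  -- row 0 of A is Pi.single 0 1
  have hvm : ∀ (B : Matrix (Fin (d+1)) (Fin (d+1)) ℝ) (j : Fin (d+1)),
      (Pi.single (0 : Fin (d+1)) (1:ℝ) ᵥ* B) j = B 0 j := by
    intro B j
    simp [Matrix.vecMul, dotProduct, Pi.single_apply]
  have hrowA : ∀ j, A 0 j = (Pi.single 0 1 : Fin (d+1) → ℝ) j := by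
    have h1 : Pi.single (0 : Fin (d+1)) (1:ℝ) ᵥ* M = Pi.single 0 1 ᵥ* N := by
      ext j; rw [hvm, hvm]; simp [hMdef, hNdef, hPdef, hQdef]
    have h2 : Pi.single (0 : Fin (d+1)) (1:ℝ) ᵥ* A = Pi.single 0 1 := by
      calc Pi.single (0 : Fin (d+1)) (1:ℝ) ᵥ* (N * M⁻¹)
          = (Pi.single 0 1 ᵥ* N) ᵥ* M⁻¹ := by rw [Matrix.vecMul_vecMul]
        _ = (Pi.single 0 1 ᵥ* M) ᵥ* M⁻¹ := by rw [h1]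
        _ = Pi.single 0 1 ᵥ* (M * M⁻¹) := by rw [Matrix.vecMul_vecMul]
        _ = Pi.single 0 1 := by rw [Matrix.mul_nonsing_inv M hMdu, Matrix.vecMul_one]
    intro j
    rw [← hvm A j, h2]
  -- the linear part matrix
  set L : Matrix (Fin d) (Fin d) ℝ := A.submatrix Fin.succ Fin.succ with hLdef
  have hkey : ∀ (c : ℝ) (y : Fin d → ℝ) (i : Fin d),
      (A *ᵥ Fin.cons c y) i.succ = c * A i.succ 0 + (L *ᵥ y) i := by
    intro c y i
    simp [Matrix.mulVec, dotProduct, Fin.sum_univ_succ, hLdef, mul_comm]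
  have hdetL : L.det = 1 := by
    have hAdet : A.det = 1 := by
      rw [hAdef, Matrix.det_mul, Matrix.det_nonsing_inv, ← hdet]
      exact Ring.mul_inverse_cancel _ hMdu
    have h0 := Matrix.det_succ_row_zero A
    rw [Fin.sum_univ_succ] at h0
    simp only [hrowA] at h0
    simp [Pi.single_apply, Fin.succ_ne_zero, Fin.succAbove_zero, hAdet] at h0
    exact h0.symm
  have hconsadd : ∀ v y : Fin d → ℝ,
      (Fin.cons 1 (v + y) : Fin (d + 1) → ℝ) = Fin.cons 1 y + Fin.cons 0 v := by
    intro v y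
    ext i'
    refine Fin.cases ?_ ?_ i' <;> simp [add_comm]
  set t : (Fin d → ℝ) →ᵃ[ℝ] (Fin d → ℝ) :=
    { toFun := fun y => Fin.tail (A *ᵥ Fin.cons 1 y)
      linear := Matrix.toLin' L
      map_vadd' := by
        intro y v
        ext i
        show Fin.tail (A *ᵥ Fin.cons 1 (v + y)) i
            = (Matrix.toLin' L v + Fin.tail (A *ᵥ Fin.cons 1 y)) i
        simp only [Fin.tail, Pi.add_apply, Matrix.toLin'_apply]
        rw [hconsadd v y, Matrix.mulVec_add, Pi.add_apply, hkey, hkey]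
        ring } with htdef
  have ht2 : ∀ k, t (pr k) = qr k := by
    intro k
    show Fin.tail (A *ᵥ Fin.cons 1 (pr k)) = qr k
    rw [show Fin.cons (1:ℝ) (pr k) = P k from rfl, hA k]
    exact Fin.tail_cons _ _
  have ht1 : LinearMap.det t.linear = 1 := by
    show LinearMap.det (Matrix.toLin' L) = 1
    rw [LinearMap.det_toLin', hdetL]
  refine ⟨t, ⟨ht1, ht2⟩, ?_⟩
  rintro t' ⟨-, ht2'⟩
  refine AffineMap.ext fun x => ?_
  have hx : x ∈ affineSpan ℝ (Set.range pr) := hp ▸ AffineSubspace.mem_top ℝ _ x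
  obtain ⟨s, w, hw1, rfl⟩ := (mem_affineSpan_iff_eq_affineCombination ℝ _).1 hx
  have hfun : ⇑t' ∘ pr = ⇑t ∘ pr := by
    funext k
    exact (ht2' k).trans (ht2 k).symm
  rw [Finset.map_affineCombination s pr w hw1, Finset.map_affineCombination s pr w hw1, hfun]
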